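/- A disconnected graph G is 6-γ_tR-edge-supercritical if and only if G is the disjoint union of two complete graphs K_n and K_m with n, m ≥ 3. -/

import Mathlib

open SimpleGraph Finset

variable {V : Type*}

/-- `S` is a dominating set of `G`. -/
def Dominating (G : SimpleGraph V) (S : Finset V) : Prop :=
  ∀ v, v ∉ S → ∃ u ∈ S, G.Adj u v

/-- `S` is a total dominating set of `G`. -/
def TotalDominating (G : SimpleGraph V) (S : Finset V) : Prop :=
  ∀ v : V, ∃ u ∈ S, G.Adj u v

/-- The domination number γ(G). -/
noncomputable def gamma (G : SimpleGraph V) [Fintype V] : ℕ :=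
  sInf {n | ∃ S : Finset V, Dominating G S ∧ S.card = n}

/-- The total domination number γ_t(G). -/
noncomputable def gammaT (G : SimpleGraph V) [Fintype V] : ℕ :=
  sInf {n | ∃ S : Finset V, TotalDominating G S ∧ S.card = n}

/-- `f` is a total Roman dominating function on `G`. -/
def IsTRDF (G : SimpleGraph V) (f : V → ℕ) : Prop :=
  (∀ v, f v ≤ 2) ∧ (∀ v, f v = 0 → ∃ u, G.Adj u v ∧ f u = 2) ∧
    (∀ v, 0 < f v → ∃ u, G.Adj u v ∧ 0 < f u)

/-- The total Roman domination number γ_tR(G). -/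
noncomputable def gammaTR (G : SimpleGraph V) [Fintype V] : ℕ :=
  sInf {n | ∃ f : V → ℕ, IsTRDF G f ∧ ∑ v, f v = n}

/-- The graph `G + uv`. -/
def addEdge (G : SimpleGraph V) (u v : V) : SimpleGraph V :=
  G ⊔ SimpleGraph.fromEdgeSet {s(u, v)}

/-- The graph `G - uv`. -/
def deleteEdge (G : SimpleGraph V) (u v : V) : SimpleGraph V :=
  G.deleteEdges {s(u, v)}

/-- `G` has no isolated vertices. -/
def NoIsolated (G : SimpleGraph V) : Prop := ∀ v : V, ∃ u, G.Adj u v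

/-- The degree of `v` in `G`. -/
noncomputable def degreeN (G : SimpleGraph V) (v : V) : ℕ :=
  {u | G.Adj v u}.ncard

lemma pair_le_sum {f : V → ℕ} {S : Finset V} {x w : V} (hx : x ∈ S) (hw : w ∈ S)
    (hne : x ≠ w) : f x + f w ≤ ∑ v ∈ S, f v := by
  classical
  have hsub : ({x, w} : Finset V) ⊆ S := by
    intro z hz; simp only [Finset.mem_insert, Finset.mem_singleton] at hz
    rcases hz with rfl | rfl <;> assumption
  calc f x + f w = ∑ v ∈ ({x, w} : Finset V), f v := (Finset.sum_pair hne).symm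
    _ ≤ ∑ v ∈ S, f v := Finset.sum_le_sum_of_subset hsub

lemma sum_ge_two {G : SimpleGraph V} {f : V → ℕ} (hf : IsTRDF G f) {S : Finset V} {w : V}
    (hw : w ∈ S) (hcl : ∀ x, G.Adj x w → x ∈ S) : 2 ≤ ∑ v ∈ S, f v := by
  obtain ⟨hle, h0, hpos⟩ := hf
  rcases Nat.eq_zero_or_pos (f w) with h | h
  · obtain ⟨x, hadj, hx2⟩ := h0 w h
    have hxS := hcl x hadj
    calc 2 = f x := hx2.symm
      _ ≤ ∑ v ∈ S, f v := Finset.single_le_sum (fun _ _ => Nat.zero_le _) hxS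
  · obtain ⟨x, hadj, hxpos⟩ := hpos w h
    have hxS := hcl x hadj
    have hne : x ≠ w := hadj.ne
    calc 2 ≤ f x + f w := by omega
      _ ≤ ∑ v ∈ S, f v := pair_le_sum hxS hw hne

lemma sum_ge_three {G : SimpleGraph V} {f : V → ℕ} (hf : IsTRDF G f) {S : Finset V}
    (hcard : 3 ≤ S.card) (hcl : ∀ w ∈ S, ∀ x, G.Adj x w → x ∈ S) : 3 ≤ ∑ v ∈ S, f v := by
  obtain ⟨hle, h0, hpos⟩ := hf
  by_cases h2 : ∃ w ∈ S, f w = 2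
  · obtain ⟨w, hw, hfw⟩ := h2
    obtain ⟨x, hadj, hxpos⟩ := hpos w (by omega)
    have hxS := hcl w hw x hadj
    have : f x + f w ≤ ∑ v ∈ S, f v := pair_le_sum hxS hw hadj.ne
    omega
  · push_neg at h2
    have hall : ∀ w ∈ S, 1 ≤ f w := by
      intro w hw
      rcases Nat.eq_zero_or_pos (f w) with h | h
      · obtain ⟨x, hadj, hx2⟩ := h0 w h
        exact absurd hx2 (h2 x (hcl w hw x hadj))
      · exact h
    calc 3 ≤ S.card := hcard
      _ = ∑ _v ∈ S, 1 := (Finset.card_eq_sum_ones S)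
      _ ≤ ∑ v ∈ S, f v := Finset.sum_le_sum hall

lemma addEdge_adj (G : SimpleGraph V) (u v a b : V) :
    (addEdge G u v).Adj a b ↔ G.Adj a b ∨ ((a = u ∧ b = v ∨ a = v ∧ b = u) ∧ a ≠ b) := by
  simp [addEdge, Sym2.eq_iff]

lemma addEdge_comm (G : SimpleGraph V) (u v : V) : addEdge G u v = addEdge G v u := by
  unfold addEdge; rw [Sym2.eq_swap]

lemma gammaTR_le (G : SimpleGraph V) [Fintype V] {f : V → ℕ} (hf : IsTRDF G f) :
    gammaTR G ≤ ∑ v, f v := Nat.sInf_le ⟨f, hf, rfl⟩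

lemma exists_of_gammaTR_eq (G : SimpleGraph V) [Fintype V] {k : ℕ} (hk : k ≠ 0)
    (h : gammaTR G = k) : ∃ f : V → ℕ, IsTRDF G f ∧ ∑ v, f v = k := by
  have hne : {n | ∃ f : V → ℕ, IsTRDF G f ∧ ∑ v, f v = n}.Nonempty := by
    by_contra h'
    rw [Set.not_nonempty_iff_eq_empty] at h'
    rw [gammaTR, h', Nat.sInf_empty] at h
    exact hk h.symm
  have := Nat.sInf_mem hne
  rw [gammaTR] at h
  rw [h] at this
  exact this

lemma gammaTR_eq_of (G : SimpleGraph V) [Fintype V] {k : ℕ} {f : V → ℕ} (hf : IsTRDF G f)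
    (hsum : ∑ v, f v = k) (hlb : ∀ g : V → ℕ, IsTRDF G g → k ≤ ∑ v, g v) :
    gammaTR G = k := by
  refine le_antisymm (hsum ▸ gammaTR_le G hf) (le_csInf ⟨k, f, hf, hsum⟩ ?_)
  rintro n ⟨g, hg, rfl⟩
  exact hlb g hg

lemma sum_four_ite [Fintype V] [DecidableEq V] (a b c d : V) (p q r s : ℕ) :
    ∑ v : V, ((if v = a then p else 0) + (if v = b then q else 0) +
      (if v = c then r else 0) + (if v = d then s else 0)) = p + q + r + s := by
  simp [Finset.sum_add_distrib, Finset.sum_ite_eq']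

section Main
variable [Fintype V] [DecidableEq V] (G : SimpleGraph V) (A B : Finset V)
  (huniv : A ∪ B = Finset.univ) (hdisj : Disjoint A B)
  (hA : ∀ u ∈ A, ∀ v ∈ A, u ≠ v → G.Adj u v)
  (hB : ∀ u ∈ B, ∀ v ∈ B, u ≠ v → G.Adj u v)
  (hAB : ∀ u ∈ A, ∀ v ∈ B, ¬G.Adj u v)
  (hA3 : 3 ≤ A.card) (hB3 : 3 ≤ B.card)

include huniv hdisj hA hB hAB hA3 hB3

omit hA3 hB3 in
lemma cross_gammaTR (hA2 : 2 ≤ A.card) (hB2 : 2 ≤ B.card) {u v : V} (hu : u ∈ A) (hv : v ∈ B) :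
    gammaTR (addEdge G u v) = 4 := by
  have hmem : ∀ w : V, w ∈ A ∨ w ∈ B := by
    intro w
    have : w ∈ A ∪ B := huniv ▸ Finset.mem_univ w
    simpa using this
  have huv : u ≠ v := fun h => hdisj.forall_ne_finset hu hv h
  set H := addEdge G u v with hH
  set f : V → ℕ := fun w => (if w = u then 2 else 0) + (if w = v then 2 else 0) with hf
  have hfu : f u = 2 := by simp [hf, huv]
  have hfv : f v = 2 := by simp [hf, Ne.symm huv]
  have hftrdf : IsTRDF H f := by
    refine ⟨?_, ?_, ?_⟩
    · intro w
      by_cases h1 : w = u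
      · subst h1; rw [hfu]
      · by_cases h2 : w = v
        · subst h2; rw [hfv]
        · simp [hf, h1, h2]
    · intro w hw
      have hwu : w ≠ u := by intro h; rw [h, hfu] at hw; omega
      have hwv : w ≠ v := by intro h; rw [h, hfv] at hw; omega
      rcases hmem w with hwA | hwB
      · exact ⟨u, (addEdge_adj G u v u w).2 (Or.inl (hA u hu w hwA (Ne.symm hwu))), hfu⟩
      · exact ⟨v, (addEdge_adj G u v v w).2 (Or.inl (hB v hv w hwB (Ne.symm hwv))), hfv⟩
    · intro w hw
      have : w = u ∨ w = v := by
        by_contra h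
        push_neg at h
        simp [hf, h.1, h.2] at hw
      rcases this with rfl | rfl
      · exact ⟨v, (addEdge_adj G w v v w).2 (Or.inr ⟨Or.inr ⟨rfl, rfl⟩, Ne.symm huv⟩),
          by rw [hfv]; omega⟩
      · exact ⟨u, (addEdge_adj G u w u w).2 (Or.inr ⟨Or.inl ⟨rfl, rfl⟩, huv⟩),
          by rw [hfu]; omega⟩
  have hsum : ∑ w, f w = 4 := by
    rw [hf]
    rw [Finset.sum_add_distrib]
    simp [Finset.sum_ite_eq']
  refine gammaTR_eq_of H hftrdf hsum ?_
  intro g hg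
  obtain ⟨wA, hwA, hwAu⟩ := Finset.exists_mem_ne (show 1 < A.card by omega) u
  obtain ⟨wB, hwB, hwBv⟩ := Finset.exists_mem_ne (show 1 < B.card by omega) v
  have hclA : ∀ x, H.Adj x wA → x ∈ A := by
    intro x hx
    rcases (addEdge_adj G u v x wA).1 hx with h | ⟨h, _⟩
    · rcases hmem x with h' | h'
      · exact h'
      · exact absurd h.symm (hAB wA hwA x h')
    · rcases h with ⟨h1, h2⟩ | ⟨h1, h2⟩
      · exact absurd hwA (by rw [h2]; exact fun hh => Finset.disjoint_left.mp hdisj hh hv)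
      · exact absurd h2 hwAu
  have hclB : ∀ x, H.Adj x wB → x ∈ B := by
    intro x hx
    rcases (addEdge_adj G u v x wB).1 hx with h | ⟨h, _⟩
    · rcases hmem x with h' | h'
      · exact absurd h (hAB x h' wB hwB)
      · exact h'
    · rcases h with ⟨h1, h2⟩ | ⟨h1, h2⟩
      · exact absurd h2 hwBv
      · exact absurd hwB (by rw [h2]; exact fun hh => Finset.disjoint_left.mp hdisj hu hh)
  have h2A : 2 ≤ ∑ w ∈ A, g w := sum_ge_two hg hwA hclA
  have h2B : 2 ≤ ∑ w ∈ B, g w := sum_ge_two hg hwB hclB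
  have hsplit : ∑ w, g w = ∑ w ∈ A, g w + ∑ w ∈ B, g w := by
    rw [← Finset.sum_union hdisj, huniv]
  omega
end Main

section Main2
variable [Fintype V] [DecidableEq V] (G : SimpleGraph V) (A B : Finset V)
  (huniv : A ∪ B = Finset.univ) (hdisj : Disjoint A B)
  (hA : ∀ u ∈ A, ∀ v ∈ A, u ≠ v → G.Adj u v)
  (hB : ∀ u ∈ B, ∀ v ∈ B, u ≠ v → G.Adj u v)
  (hAB : ∀ u ∈ A, ∀ v ∈ B, ¬G.Adj u v)
  (hA3 : 3 ≤ A.card) (hB3 : 3 ≤ B.card)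

include huniv hdisj hA hB hAB hA3 hB3

lemma main_props :
    gammaTR G = 6 ∧ NoIsolated G ∧ (∃ u v : V, u ≠ v ∧ ¬G.Adj u v) ∧
      ∀ u v : V, u ≠ v → ¬G.Adj u v → gammaTR (addEdge G u v) = 4 := by
  have hmem : ∀ w : V, w ∈ A ∨ w ∈ B := by
    intro w
    have : w ∈ A ∪ B := huniv ▸ Finset.mem_univ w
    simpa using this
  have hABne : ∀ x ∈ A, ∀ y ∈ B, x ≠ y := fun x hx y hy h =>
    Finset.disjoint_left.mp hdisj hx (h ▸ hy)
  obtain ⟨a1, ha1, a2, ha2, na12⟩ := Finset.one_lt_card.mp (show 1 < A.card by omega)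
  obtain ⟨b1, hb1, b2, hb2, nb12⟩ := Finset.one_lt_card.mp (show 1 < B.card by omega)
  have n11 : a1 ≠ b1 := hABne a1 ha1 b1 hb1
  have n12 : a1 ≠ b2 := hABne a1 ha1 b2 hb2
  have n21 : a2 ≠ b1 := hABne a2 ha2 b1 hb1
  have n22 : a2 ≠ b2 := hABne a2 ha2 b2 hb2
  -- γ_tR(G) = 6
  have hgam6 : gammaTR G = 6 := by
    set f : V → ℕ := fun w => (if w = a1 then 2 else 0) + (if w = a2 then 1 else 0) +
      (if w = b1 then 2 else 0) + (if w = b2 then 1 else 0) with hf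
    have hfa1 : f a1 = 2 := by simp [hf, na12, n11, n12]
    have hfa2 : f a2 = 1 := by simp [hf, Ne.symm na12, n21, n22]
    have hfb1 : f b1 = 2 := by simp [hf, Ne.symm n11, Ne.symm n21, nb12]
    have hfb2 : f b2 = 1 := by simp [hf, Ne.symm n12, Ne.symm n22, Ne.symm nb12]
    have hout : ∀ w, w ≠ a1 → w ≠ a2 → w ≠ b1 → w ≠ b2 → f w = 0 := by
      intro w h1 h2 h3 h4; simp [hf, h1, h2, h3, h4]
    have hftrdf : IsTRDF G f := by
      refine ⟨?_, ?_, ?_⟩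
      · intro w
        rcases eq_or_ne w a1 with rfl | h1
        · rw [hfa1]
        · rcases eq_or_ne w a2 with rfl | h2
          · rw [hfa2]; omega
          · rcases eq_or_ne w b1 with rfl | h3
            · rw [hfb1]
            · rcases eq_or_ne w b2 with rfl | h4
              · rw [hfb2]; omega
              · rw [hout w h1 h2 h3 h4]; omega
      · intro w hw
        have h1 : w ≠ a1 := by intro h; rw [h, hfa1] at hw; omega
        have h2 : w ≠ a2 := by intro h; rw [h, hfa2] at hw; omega
        have h3 : w ≠ b1 := by intro h; rw [h, hfb1] at hw; omega
        have h4 : w ≠ b2 := by intro h; rw [h, hfb2] at hw; omega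
        rcases hmem w with hwA | hwB
        · exact ⟨a1, hA a1 ha1 w hwA (Ne.symm h1), hfa1⟩
        · exact ⟨b1, hB b1 hb1 w hwB (Ne.symm h3), hfb1⟩
      · intro w hw
        rcases eq_or_ne w a1 with rfl | h1
        · exact ⟨a2, (hA a2 ha2 w ha1 (Ne.symm na12)), by rw [hfa2]; omega⟩
        · rcases eq_or_ne w a2 with rfl | h2
          · exact ⟨a1, (hA a1 ha1 w ha2 na12), by rw [hfa1]; omega⟩
          · rcases eq_or_ne w b1 with rfl | h3
            · exact ⟨b2, (hB b2 hb2 w hb1 (Ne.symm nb12)), by rw [hfb2]; omega⟩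
            · rcases eq_or_ne w b2 with rfl | h4
              · exact ⟨b1, (hB b1 hb1 w hb2 nb12), by rw [hfb1]; omega⟩
              · rw [hout w h1 h2 h3 h4] at hw; omega
    have hsum : ∑ w, f w = 6 := by rw [hf, sum_four_ite]
    refine gammaTR_eq_of G hftrdf hsum ?_
    intro g hg
    have hclA : ∀ w ∈ A, ∀ x, G.Adj x w → x ∈ A := by
      intro w hw x hx
      rcases hmem x with h' | h'
      · exact h'
      · exact absurd hx.symm (hAB w hw x h')
    have hclB : ∀ w ∈ B, ∀ x, G.Adj x w → x ∈ B := by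
      intro w hw x hx
      rcases hmem x with h' | h'
      · exact absurd hx (hAB x h' w hw)
      · exact h'
    have h3A : 3 ≤ ∑ w ∈ A, g w := sum_ge_three hg hA3 hclA
    have h3B : 3 ≤ ∑ w ∈ B, g w := sum_ge_three hg hB3 hclB
    have hsplit : ∑ w, g w = ∑ w ∈ A, g w + ∑ w ∈ B, g w := by
      rw [← Finset.sum_union hdisj, huniv]
    omega
  refine ⟨hgam6, ?_, ⟨a1, b1, n11, hAB a1 ha1 b1 hb1⟩, ?_⟩
  · intro w
    rcases hmem w with hwA | hwB
    · obtain ⟨x, hx, hxw⟩ := Finset.exists_mem_ne (show 1 < A.card by omega) w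
      exact ⟨x, hA x hx w hwA hxw⟩
    · obtain ⟨x, hx, hxw⟩ := Finset.exists_mem_ne (show 1 < B.card by omega) w
      exact ⟨x, hB x hx w hwB hxw⟩
  · intro u v huv hnadj
    rcases hmem u with hu | hu <;> rcases hmem v with hv | hv
    · exact absurd (hA u hu v hv huv) hnadj
    · exact cross_gammaTR G A B huniv hdisj hA hB hAB (by omega) (by omega) hu hv
    · rw [addEdge_comm]
      exact cross_gammaTR G A B huniv hdisj hA hB hAB (by omega) (by omega) hv hu
    · exact absurd (hB u hu v hv huv) hnadj
end Main2


lemma reachable_mem_closed {H : SimpleGraph V} {S : Finset V}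
    (hcl : ∀ x y, x ∈ S → H.Adj x y → y ∈ S) {a w : V} (ha : a ∈ S)
    (hr : H.Reachable a w) : w ∈ S := by
  obtain ⟨p⟩ := hr
  induction p with
  | nil => exact ha
  | cons h p ih => exact ih (hcl _ _ ha h)

lemma disconnected_ge_five [Fintype V] [DecidableEq V] {H : SimpleGraph V}
    (hcard : 6 ≤ Fintype.card V) {a b : V} (hnr : ¬H.Reachable a b)
    {f : V → ℕ} (hf : IsTRDF H f) : 5 ≤ ∑ v, f v := by
  classical
  set S : Finset V := Finset.univ.filter (fun w => H.Reachable a w) with hS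
  have haS : a ∈ S := Finset.mem_filter.mpr ⟨Finset.mem_univ a, Reachable.refl a⟩
  have hbS : b ∈ Sᶜ := by simp [hS, hnr]
  have hclS : ∀ w ∈ S, ∀ x, H.Adj x w → x ∈ S := by
    intro w hw x hx
    simp only [hS, Finset.mem_filter, Finset.mem_univ, true_and] at hw ⊢
    exact hw.trans hx.symm.reachable
  have hclSc : ∀ w ∈ Sᶜ, ∀ x, H.Adj x w → x ∈ Sᶜ := by
    intro w hw x hx
    simp only [hS, Finset.mem_compl, Finset.mem_filter, Finset.mem_univ, true_and] at hw ⊢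
    exact fun hr => hw (hr.trans hx.reachable)
  have hsplit : ∑ w, f w = ∑ w ∈ S, f w + ∑ w ∈ Sᶜ, f w :=
    (Finset.sum_add_sum_compl S f).symm
  have hcards : S.card + Sᶜ.card = Fintype.card V := by
    rw [Finset.card_add_card_compl]
  rcases le_or_gt 3 S.card with h3 | h3
  · have := sum_ge_three hf h3 hclS
    have := sum_ge_two hf hbS (fun x hx => hclSc b hbS x hx)
    omega
  · have h3c : 3 ≤ Sᶜ.card := by omega
    have := sum_ge_three hf h3c hclSc
    have := sum_ge_two hf haS (fun x hx => hclS a haS x hx)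
    omega

lemma five_trdf [Fintype V] [DecidableEq V] (G : SimpleGraph V) (a1 a2 b1 b2 : V)
    (na12 : a1 ≠ a2) (n11 : a1 ≠ b1) (n12 : a1 ≠ b2) (n21 : a2 ≠ b1) (n22 : a2 ≠ b2)
    (nb12 : b1 ≠ b2) (h12 : G.Adj a1 a2) (h34 : G.Adj b1 b2)
    (hdom : ∀ w, w ≠ a1 → w ≠ a2 → w ≠ b1 → w ≠ b2 → G.Adj b1 w) :
    ∃ f : V → ℕ, IsTRDF G f ∧ ∑ v, f v = 5 := by
  set f : V → ℕ := fun w => (if w = a1 then 1 else 0) + (if w = a2 then 1 else 0) +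
    (if w = b1 then 2 else 0) + (if w = b2 then 1 else 0) with hf
  have hfa1 : f a1 = 1 := by simp [hf, na12, n11, n12]
  have hfa2 : f a2 = 1 := by simp [hf, Ne.symm na12, n21, n22]
  have hfb1 : f b1 = 2 := by simp [hf, Ne.symm n11, Ne.symm n21, nb12]
  have hfb2 : f b2 = 1 := by simp [hf, Ne.symm n12, Ne.symm n22, Ne.symm nb12]
  have hout : ∀ w, w ≠ a1 → w ≠ a2 → w ≠ b1 → w ≠ b2 → f w = 0 := by
    intro w h1 h2 h3 h4; simp [hf, h1, h2, h3, h4]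
  refine ⟨f, ⟨?_, ?_, ?_⟩, by rw [hf, sum_four_ite]⟩
  · intro w
    rcases eq_or_ne w a1 with rfl | h1
    · rw [hfa1]; omega
    · rcases eq_or_ne w a2 with rfl | h2
      · rw [hfa2]; omega
      · rcases eq_or_ne w b1 with rfl | h3
        · rw [hfb1]
        · rcases eq_or_ne w b2 with rfl | h4
          · rw [hfb2]; omega
          · rw [hout w h1 h2 h3 h4]; omega
  · intro w hw
    have h1 : w ≠ a1 := by intro h; rw [h, hfa1] at hw; omega
    have h2 : w ≠ a2 := by intro h; rw [h, hfa2] at hw; omega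
    have h3 : w ≠ b1 := by intro h; rw [h, hfb1] at hw; omega
    have h4 : w ≠ b2 := by intro h; rw [h, hfb2] at hw; omega
    exact ⟨b1, hdom w h1 h2 h3 h4, hfb1⟩
  · intro w hw
    rcases eq_or_ne w a1 with rfl | h1
    · exact ⟨a2, h12.symm, by rw [hfa2]; omega⟩
    · rcases eq_or_ne w a2 with rfl | h2
      · exact ⟨a1, h12, by rw [hfa1]; omega⟩
      · rcases eq_or_ne w b1 with rfl | h3
        · exact ⟨b2, h34.symm, by rw [hfb2]; omega⟩
        · rcases eq_or_ne w b2 with rfl | h4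
          · exact ⟨b1, h34, by rw [hfb1]; omega⟩
          · rw [hout w h1 h2 h3 h4] at hw; omega

section Iso
variable [Fintype V] [DecidableEq V] (G : SimpleGraph V) (A B : Finset V)

lemma build_iso (huniv : A ∪ B = Finset.univ) (hdisj : Disjoint A B)
    (hA : ∀ u ∈ A, ∀ v ∈ A, u ≠ v → G.Adj u v)
    (hB : ∀ u ∈ B, ∀ v ∈ B, u ≠ v → G.Adj u v)
    (hAB : ∀ u ∈ A, ∀ v ∈ B, ¬G.Adj u v) :
    Nonempty (G ≃g ((⊤ : SimpleGraph (Fin A.card)) ⊕g (⊤ : SimpleGraph (Fin B.card)))) := by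
  have hmem : ∀ w : V, w ∉ A ↔ w ∈ B := by
    intro w
    constructor
    · intro h
      have : w ∈ A ∪ B := huniv ▸ Finset.mem_univ w
      simp only [Finset.mem_union] at this
      tauto
    · intro h h'
      exact Finset.disjoint_left.mp hdisj h' h
  let e1 : {x // x ∈ A} ≃ Fin A.card := A.equivFin
  let e2 : {x // ¬ x ∈ A} ≃ Fin B.card :=
    (Equiv.subtypeEquivRight (fun x => hmem x)).trans B.equivFin
  let eqv : V ≃ Fin A.card ⊕ Fin B.card :=
    (Equiv.sumCompl (· ∈ A)).symm.trans (Equiv.sumCongr e1 e2)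
  refine ⟨⟨eqv, ?_⟩⟩
  intro x y
  show ((⊤ : SimpleGraph (Fin A.card)) ⊕g (⊤ : SimpleGraph (Fin B.card))).Adj (eqv x) (eqv y)
    ↔ G.Adj x y
  by_cases hx : x ∈ A <;> by_cases hy : y ∈ A
  · have ex : eqv x = Sum.inl (e1 ⟨x, hx⟩) := by
      simp only [eqv, Equiv.trans_apply, Equiv.sumCompl_symm_apply_of_pos hx,
        Equiv.sumCongr_apply, Sum.map_inl]
    have ey : eqv y = Sum.inl (e1 ⟨y, hy⟩) := by
      simp only [eqv, Equiv.trans_apply, Equiv.sumCompl_symm_apply_of_pos hy,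
        Equiv.sumCongr_apply, Sum.map_inl]
    rw [ex, ey]
    simp only [SimpleGraph.sum_adj, top_adj]
    constructor
    · intro h
      have hne : (⟨x, hx⟩ : {x // x ∈ A}) ≠ ⟨y, hy⟩ := fun hh => h (by rw [hh])
      exact hA x hx y hy (fun hh => hne (Subtype.ext hh))
    · intro h hh
      exact h.ne (congrArg Subtype.val (e1.injective hh))
  · have ex : eqv x = Sum.inl (e1 ⟨x, hx⟩) := by
      simp only [eqv, Equiv.trans_apply, Equiv.sumCompl_symm_apply_of_pos hx,
        Equiv.sumCongr_apply, Sum.map_inl]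
    have ey : eqv y = Sum.inr (e2 ⟨y, hy⟩) := by
      simp only [eqv, Equiv.trans_apply, Equiv.sumCompl_symm_apply_of_neg hy,
        Equiv.sumCongr_apply, Sum.map_inr]
    rw [ex, ey]
    simp only [SimpleGraph.sum_adj]
    exact iff_of_false (by simp) (hAB x hx y ((hmem y).mp hy))
  · have ex : eqv x = Sum.inr (e2 ⟨x, hx⟩) := by
      simp only [eqv, Equiv.trans_apply, Equiv.sumCompl_symm_apply_of_neg hx,
        Equiv.sumCongr_apply, Sum.map_inr]
    have ey : eqv y = Sum.inl (e1 ⟨y, hy⟩) := by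
      simp only [eqv, Equiv.trans_apply, Equiv.sumCompl_symm_apply_of_pos hy,
        Equiv.sumCongr_apply, Sum.map_inl]
    rw [ex, ey]
    simp only [SimpleGraph.sum_adj]
    exact iff_of_false (by simp) (fun h => hAB y hy x ((hmem x).mp hx) h.symm)
  · have ex : eqv x = Sum.inr (e2 ⟨x, hx⟩) := by
      simp only [eqv, Equiv.trans_apply, Equiv.sumCompl_symm_apply_of_neg hx,
        Equiv.sumCongr_apply, Sum.map_inr]
    have ey : eqv y = Sum.inr (e2 ⟨y, hy⟩) := by
      simp only [eqv, Equiv.trans_apply, Equiv.sumCompl_symm_apply_of_neg hy,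
        Equiv.sumCongr_apply, Sum.map_inr]
    rw [ex, ey]
    simp only [SimpleGraph.sum_adj, top_adj]
    constructor
    · intro h
      have hne : x ≠ y := fun hh => h (by subst hh; rfl)
      exact hB x ((hmem x).mp hx) y ((hmem y).mp hy) hne
    · intro h hh
      have := e2.injective hh
      exact h.ne (congrArg Subtype.val (Equiv.injective _ hh) : x = y)
end Iso

lemma iso_struct [Fintype V] [DecidableEq V] (G : SimpleGraph V) {n m : ℕ}
    (hn : 3 ≤ n) (hm : 3 ≤ m)
    (e : G ≃g ((⊤ : SimpleGraph (Fin n)) ⊕g (⊤ : SimpleGraph (Fin m)))) :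
    ∃ A B : Finset V, A ∪ B = Finset.univ ∧ Disjoint A B ∧
      (∀ u ∈ A, ∀ v ∈ A, u ≠ v → G.Adj u v) ∧
      (∀ u ∈ B, ∀ v ∈ B, u ≠ v → G.Adj u v) ∧
      (∀ u ∈ A, ∀ v ∈ B, ¬G.Adj u v) ∧ 3 ≤ A.card ∧ 3 ≤ B.card := by
  refine ⟨Finset.univ.filter (fun w => (e w).isLeft), Finset.univ.filter (fun w => (e w).isRight),
    ?_, ?_, ?_, ?_, ?_, ?_, ?_⟩
  · ext w
    simp only [Finset.mem_union, Finset.mem_filter, Finset.mem_univ, true_and, iff_true]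
    rcases e w with a | a <;> simp
  · rw [Finset.disjoint_left]
    intro w hw hw'
    simp only [Finset.mem_filter, Finset.mem_univ, true_and] at hw hw'
    rcases hww : e w with a | a <;> rw [hww] at hw hw' <;> simp_all
  · intro u hu v hv huv
    simp only [Finset.mem_filter, Finset.mem_univ, true_and, Sum.isLeft_iff] at hu hv
    obtain ⟨a, ha⟩ := hu
    obtain ⟨b, hb⟩ := hv
    have hab : a ≠ b := by
      rintro rfl
      exact huv (e.injective (ha.trans hb.symm))
    have : ((⊤ : SimpleGraph (Fin n)) ⊕g (⊤ : SimpleGraph (Fin m))).Adj (e u) (e v) := by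
      rw [ha, hb]; simpa using hab
    exact e.map_rel_iff.mp this
  · intro u hu v hv huv
    simp only [Finset.mem_filter, Finset.mem_univ, true_and, Sum.isRight_iff] at hu hv
    obtain ⟨a, ha⟩ := hu
    obtain ⟨b, hb⟩ := hv
    have hab : a ≠ b := by
      rintro rfl
      exact huv (e.injective (ha.trans hb.symm))
    have : ((⊤ : SimpleGraph (Fin n)) ⊕g (⊤ : SimpleGraph (Fin m))).Adj (e u) (e v) := by
      rw [ha, hb]; simpa using hab
    exact e.map_rel_iff.mp this
  · intro u hu v hv hadj
    simp only [Finset.mem_filter, Finset.mem_univ, true_and, Sum.isLeft_iff,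
      Sum.isRight_iff] at hu hv
    obtain ⟨a, ha⟩ := hu
    obtain ⟨b, hb⟩ := hv
    have := e.map_rel_iff.mpr hadj
    rw [ha, hb] at this
    simpa using this
  · calc 3 ≤ n := hn
      _ = (Finset.univ : Finset (Fin n)).card := by simp
      _ ≤ _ := by
        refine Finset.card_le_card_of_injOn (fun i => e.symm (Sum.inl i)) ?_ ?_
        · intro i _
          simp only [Finset.mem_filter, Finset.mem_univ, true_and]
          have : e (e.symm (Sum.inl i)) = Sum.inl i := e.apply_symm_apply _
          simp
        · intro i _ j _ hij
          have := congrArg e hij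
          simp only [RelIso.apply_symm_apply] at this
          exact Sum.inl_injective this
  · calc 3 ≤ m := hm
      _ = (Finset.univ : Finset (Fin m)).card := by simp
      _ ≤ _ := by
        refine Finset.card_le_card_of_injOn (fun i => e.symm (Sum.inr i)) ?_ ?_
        · intro i _
          simp only [Finset.mem_filter, Finset.mem_univ, true_and]
          have : e (e.symm (Sum.inr i)) = Sum.inr i := e.apply_symm_apply _
          simp
        · intro i _ j _ hij
          have := congrArg e hij
          simp only [RelIso.apply_symm_apply] at this
          exact Sum.inr_injective this


lemma forward_struct [Fintype V] [DecidableEq V] (G : SimpleGraph V) (hdisc : ¬G.Connected)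
    (h6 : gammaTR G = 6) (hni : NoIsolated G)
    (hsc : ∀ u v : V, u ≠ v → ¬G.Adj u v → gammaTR (addEdge G u v) = 4) :
    ∃ A B : Finset V, A ∪ B = Finset.univ ∧ Disjoint A B ∧
      (∀ u ∈ A, ∀ v ∈ A, u ≠ v → G.Adj u v) ∧
      (∀ u ∈ B, ∀ v ∈ B, u ≠ v → G.Adj u v) ∧
      (∀ u ∈ A, ∀ v ∈ B, ¬G.Adj u v) ∧ 3 ≤ A.card ∧ 3 ≤ B.card := by
  classical
  have hones : IsTRDF G (fun _ => 1) := by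
    refine ⟨fun _ => one_le_two, fun v h => absurd h one_ne_zero, fun v _ => ?_⟩
    obtain ⟨u, hu⟩ := hni v
    exact ⟨u, hu, one_pos⟩
  have hcard6 : 6 ≤ Fintype.card V := by
    have := gammaTR_le G hones
    simpa [h6] using this
  have hne : Nonempty V := Fintype.card_pos_iff.mp (by omega)
  have hconn : ∀ u v : V, u ≠ v → ¬G.Adj u v → ∀ x y : V, (addEdge G u v).Reachable x y := by
    intro u v huv hnadj
    by_contra h
    push_neg at h
    obtain ⟨x, y, hxy⟩ := h
    obtain ⟨f, hf, hsum⟩ := exists_of_gammaTR_eq _ (by omega) (hsc u v huv hnadj)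
    have := disconnected_ge_five hcard6 hxy hf
    omega
  have hnp : ∃ a b : V, ¬G.Reachable a b := by
    by_contra h
    push_neg at h
    exact hdisc ((connected_iff (G := G)).mpr ⟨h, hne⟩)
  obtain ⟨a, b, hab⟩ := hnp
  set A : Finset V := Finset.univ.filter (fun w => G.Reachable a w) with hAdef
  have hmemA : ∀ w, w ∈ A ↔ G.Reachable a w := by
    intro w; simp [hAdef]
  have haA : a ∈ A := (hmemA a).mpr (Reachable.refl a)
  have hbA : b ∉ A := fun h => hab ((hmemA b).mp h)
  have hbAc : b ∈ Aᶜ := Finset.mem_compl.mpr hbA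
  -- A is a clique
  have hAcl : ∀ u ∈ A, ∀ v ∈ A, u ≠ v → G.Adj u v := by
    intro u hu v hv huv
    by_contra hnadj
    have hcl : ∀ x y, x ∈ A → (addEdge G u v).Adj x y → y ∈ A := by
      intro x y hx hxy
      rcases (addEdge_adj G u v x y).1 hxy with h | ⟨h, _⟩
      · exact (hmemA y).mpr (((hmemA x).mp hx).trans h.reachable)
      · rcases h with ⟨_, h2⟩ | ⟨_, h2⟩
        · exact h2 ▸ hv
        · exact h2 ▸ hu
    exact hbA (reachable_mem_closed hcl haA (hconn u v huv hnadj a b))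
  -- Aᶜ is a clique
  have hBcl : ∀ u ∈ Aᶜ, ∀ v ∈ Aᶜ, u ≠ v → G.Adj u v := by
    intro u hu v hv huv
    rw [Finset.mem_compl] at hu hv
    by_contra hnadj
    have hcl : ∀ x y, x ∈ Aᶜ → (addEdge G u v).Adj x y → y ∈ Aᶜ := by
      intro x y hx hxy
      rw [Finset.mem_compl] at hx ⊢
      rcases (addEdge_adj G u v x y).1 hxy with h | ⟨h, _⟩
      · intro hy
        exact hx ((hmemA x).mpr (((hmemA y).mp hy).trans h.symm.reachable))
      · rcases h with ⟨_, h2⟩ | ⟨_, h2⟩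
        · exact h2 ▸ Finset.mem_compl.mp (Finset.mem_compl.mpr hv)
        · exact h2 ▸ Finset.mem_compl.mp (Finset.mem_compl.mpr hu)
    have := reachable_mem_closed hcl hbAc (hconn u v huv hnadj b a)
    exact Finset.mem_compl.mp this haA
  -- no cross edges
  have hcross : ∀ u ∈ A, ∀ v ∈ Aᶜ, ¬G.Adj u v := by
    intro u hu v hv hadj
    rw [Finset.mem_compl] at hv
    exact hv ((hmemA v).mpr (((hmemA u).mp hu).trans hadj.reachable))
  -- both sides have at least 2 vertices
  have h2A : 1 < A.card := by
    obtain ⟨x, hx⟩ := hni a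
    have hxA : x ∈ A := (hmemA x).mpr hx.symm.reachable
    exact Finset.one_lt_card.mpr ⟨a, haA, x, hxA, fun h => G.irrefl (h ▸ hx)⟩
  have h2B : 1 < Aᶜ.card := by
    obtain ⟨y, hy⟩ := hni b
    have hyB : y ∈ Aᶜ := by
      rw [Finset.mem_compl]
      intro hyA
      exact hbA ((hmemA b).mpr (((hmemA y).mp hyA).trans hy.reachable))
    exact Finset.one_lt_card.mpr ⟨b, hbAc, y, hyB, fun h => G.irrefl (h ▸ hy)⟩
  obtain ⟨a1, ha1, a2, ha2, na12⟩ := Finset.one_lt_card.mp h2A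
  obtain ⟨b1, hb1, b2, hb2, nb12⟩ := Finset.one_lt_card.mp h2B
  have hABne : ∀ x ∈ A, ∀ y ∈ Aᶜ, x ≠ y := by
    intro x hx y hy h
    exact Finset.mem_compl.mp hy (h ▸ hx)
  -- A has at least 3 vertices
  have h3A : 3 ≤ A.card := by
    by_contra h
    have hAeq : ({a1, a2} : Finset V) = A := by
      apply Finset.eq_of_subset_of_card_le
      · intro z hz
        simp only [Finset.mem_insert, Finset.mem_singleton] at hz
        rcases hz with rfl | rfl <;> assumption
      · rw [Finset.card_pair na12]; omega
    have hdom : ∀ w, w ≠ a1 → w ≠ a2 → w ≠ b1 → w ≠ b2 → G.Adj b1 w := by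
      intro w h1 h2 h3 h4
      by_cases hw : w ∈ A
      · rw [← hAeq] at hw
        simp only [Finset.mem_insert, Finset.mem_singleton] at hw
        tauto
      · exact hBcl b1 hb1 w (Finset.mem_compl.mpr hw) (Ne.symm h3)
    obtain ⟨f, hf, hsum⟩ := five_trdf G a1 a2 b1 b2 na12
      (hABne a1 ha1 b1 hb1) (hABne a1 ha1 b2 hb2) (hABne a2 ha2 b1 hb1) (hABne a2 ha2 b2 hb2)
      nb12 (hAcl a1 ha1 a2 ha2 na12) (hBcl b1 hb1 b2 hb2 nb12) hdom
    have := gammaTR_le G hf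
    rw [hsum, h6] at this
    omega
  -- Aᶜ has at least 3 vertices
  have h3B : 3 ≤ Aᶜ.card := by
    by_contra h
    have hBeq : ({b1, b2} : Finset V) = Aᶜ := by
      apply Finset.eq_of_subset_of_card_le
      · intro z hz
        simp only [Finset.mem_insert, Finset.mem_singleton] at hz
        rcases hz with rfl | rfl <;> assumption
      · rw [Finset.card_pair nb12]; omega
    have hdom : ∀ w, w ≠ b1 → w ≠ b2 → w ≠ a1 → w ≠ a2 → G.Adj a1 w := by
      intro w h1 h2 h3 h4
      by_cases hw : w ∈ A
      · exact hAcl a1 ha1 w hw (Ne.symm h3)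
      · have hw' : w ∈ Aᶜ := Finset.mem_compl.mpr hw
        rw [← hBeq] at hw'
        simp only [Finset.mem_insert, Finset.mem_singleton] at hw'
        tauto
    obtain ⟨f, hf, hsum⟩ := five_trdf G b1 b2 a1 a2 nb12
      (Ne.symm (hABne a1 ha1 b1 hb1)) (Ne.symm (hABne a2 ha2 b1 hb1))
      (Ne.symm (hABne a1 ha1 b2 hb2)) (Ne.symm (hABne a2 ha2 b2 hb2))
      na12 (hBcl b1 hb1 b2 hb2 nb12) (hAcl a1 ha1 a2 ha2 na12) hdom
    have := gammaTR_le G hf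
    rw [hsum, h6] at this
    omega
  exact ⟨A, Aᶜ, by simp, disjoint_compl_right, hAcl, hBcl, hcross, h3A, h3B⟩

theorem stmt13 (G : SimpleGraph V) [Fintype V] (hdisc : ¬G.Connected) :
    (gammaTR G = 6 ∧ NoIsolated G ∧ (∃ u v : V, u ≠ v ∧ ¬G.Adj u v) ∧
        ∀ u v : V, u ≠ v → ¬G.Adj u v → gammaTR (addEdge G u v) = 4) ↔
      ∃ n m : ℕ, 3 ≤ n ∧ 3 ≤ m ∧
        Nonempty (G ≃g ((⊤ : SimpleGraph (Fin n)) ⊕g (⊤ : SimpleGraph (Fin m)))) := by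
  classical
  constructor
  · rintro ⟨h6, hni, -, hsc⟩
    obtain ⟨A, B, huniv, hdisj, hA, hB, hAB, h3A, h3B⟩ := forward_struct G hdisc h6 hni hsc
    exact ⟨A.card, B.card, h3A, h3B, build_iso G A B huniv hdisj hA hB hAB⟩
  · rintro ⟨n, m, hn, hm, ⟨e⟩⟩
    obtain ⟨A, B, huniv, hdisj, hA, hB, hAB, h3A, h3B⟩ := iso_struct G hn hm e
    exact main_props G A B huniv hdisj hA hB hAB h3A h3B
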